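/- Let z : [0, ρ̄] → ℝ be continuous, C¹ on (0, ρ̄), with z(φ) < 0 for φ ∈ (0, ρ̄), z(ρ̄) = 0, satisfying ż(φ) = h(φ) − c − D(φ)g(φ)/z(φ) on (0, ρ̄), where h is continuous, D, g ≥ 0 are continuous with D(φ)g(φ)/(φ − ρ̄) → 0 as φ → ρ̄⁻. If c < h(ρ̄), then z is differentiable at ρ̄ (from the left) and ż(ρ̄) = h(ρ̄) − c. -/

import Mathlib

open Set Filter Topology

theorem stmt0 (ρ : ℝ) (hρ : 0 < ρ) (h D g z : ℝ → ℝ) (c : ℝ)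
    (hh : ContinuousOn h (Icc 0 ρ))
    (hD : ContinuousOn D (Icc 0 ρ)) (hg : ContinuousOn g (Icc 0 ρ))
    (hDpos : ∀ φ ∈ Ioo 0 ρ, 0 < D φ) (hgpos : ∀ φ ∈ Ioo 0 ρ, 0 < g φ)
    (hgρ : g ρ = 0) (hDρ : D ρ = 0)
    (hz : ContinuousOn z (Icc 0 ρ))
    (hzneg : ∀ φ ∈ Ioo 0 ρ, z φ < 0) (hzρ : z ρ = 0)
    (hode : ∀ φ ∈ Ioo 0 ρ, HasDerivAt z (h φ - c - D φ * g φ / z φ) φ)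
    (hlim : Tendsto (fun φ => D φ * g φ / (φ - ρ)) (𝓝[<] ρ) (𝓝 0))
    (hc : c < h ρ) :
    Tendsto (fun φ => (z φ - z ρ) / (φ - ρ)) (𝓝[<] ρ) (𝓝 (h ρ - c)) := by
  have hρIcc : ρ ∈ Icc (0:ℝ) ρ := ⟨hρ.le, le_rfl⟩
  have hmemIoo : Ioo 0 ρ ∈ 𝓝[<] ρ := Ioo_mem_nhdsLT_of_mem ⟨hρ, le_rfl⟩
  -- h tends to h ρ from the left
  have hhlim : Tendsto h (𝓝[<] ρ) (𝓝 (h ρ)) := by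
    have := ((hh ρ hρIcc).mono (Ioo_subset_Icc_self : Ioo 0 ρ ⊆ Icc 0 ρ))
    rwa [ContinuousWithinAt, nhdsWithin_Ioo_eq_nhdsLT hρ] at this
  set ε : ℝ := (h ρ - c) / 2 with hεdef
  have hε : 0 < ε := by simp only [hεdef]; linarith
  -- eventually the derivative is at least ε
  have h1 : ∀ᶠ ξ in 𝓝[<] ρ, ξ ∈ Ioo 0 ρ ∧ c + ε < h ξ := by
    filter_upwards [hmemIoo,
      hhlim.eventually (eventually_gt_nhds (by linarith : c + ε < h ρ))] with ξ h1 h2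
    exact ⟨h1, h2⟩
  obtain ⟨a, ha, haS⟩ := mem_nhdsLT_iff_exists_Ioo_subset.1 h1
  set b : ℝ := max a 0 with hbdef
  have hb : b < ρ := max_lt ha hρ
  have hbsub : Ioo b ρ ⊆ Ioo a ρ := Ioo_subset_Ioo (le_max_left a 0) le_rfl
  have hb0 : Ioo b ρ ⊆ Ioo 0 ρ := Ioo_subset_Ioo (le_max_right a 0) le_rfl
  have hder : ∀ ξ ∈ Ioo b ρ, ε ≤ h ξ - c - D ξ * g ξ / z ξ := by
    intro ξ hξ
    have hξ' := haS (hbsub hξ)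
    have hξIoo : ξ ∈ Ioo 0 ρ := hξ'.1
    have hDg : 0 < D ξ * g ξ := mul_pos (hDpos ξ hξIoo) (hgpos ξ hξIoo)
    have hzn : z ξ < 0 := hzneg ξ hξIoo
    have : D ξ * g ξ / z ξ < 0 := div_neg_of_pos_of_neg hDg hzn
    have := hξ'.2
    linarith
  -- lower bound on the difference quotient
  have hbound : ∀ φ ∈ Ioo b ρ, ε ≤ z φ / (φ - ρ) := by
    intro φ hφ
    set w : ℝ → ℝ := fun t => z t - ε * t with hwdef
    have hderw : ∀ x ∈ Ioo b ρ, HasDerivAt w (h x - c - D x * g x / z x - ε) x := by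
      intro x hx
      exact ((hode x (hb0 hx)).sub ((hasDerivAt_id x).const_mul ε)).congr_deriv (by simp)
    have hsub : Icc φ ρ ⊆ Icc 0 ρ := Icc_subset_Icc (hb0 hφ).1.le le_rfl
    have hint : interior (Icc φ ρ) ⊆ Ioo b ρ := by
      rw [interior_Icc]
      exact Ioo_subset_Ioo hφ.1.le le_rfl
    have hmono : MonotoneOn w (Icc φ ρ) := by
      apply monotoneOn_of_deriv_nonneg (convex_Icc φ ρ)
      · exact (hz.mono hsub).sub (continuousOn_const.mul continuousOn_id)
      · intro x hx
        exact (hderw x (hint hx)).differentiableAt.differentiableWithinAt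
      · intro x hx
        rw [(hderw x (hint hx)).deriv]
        have := hder x (hint hx)
        linarith
    have := hmono ⟨le_rfl, hφ.2.le⟩ (right_mem_Icc.2 hφ.2.le) hφ.2.le
    simp only [hwdef, hzρ] at this
    have hφρ : φ - ρ < 0 := by linarith [hφ.2]
    rw [le_div_iff_of_neg hφρ]
    nlinarith
  have hbev : ∀ᶠ φ in 𝓝[<] ρ, φ ∈ Ioo 0 ρ ∧ ε ≤ z φ / (φ - ρ) := by
    filter_upwards [Ioo_mem_nhdsLT_of_mem ⟨hb, le_rfl⟩] with φ hφ
    exact ⟨hb0 hφ, hbound φ hφ⟩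
  -- D g / z tends to 0
  have hDgz : Tendsto (fun φ => D φ * g φ / z φ) (𝓝[<] ρ) (𝓝 0) := by
    apply squeeze_zero_norm' (a := fun φ => |D φ * g φ / (φ - ρ)| * (1 / ε))
    · filter_upwards [hbev] with φ ⟨hφIoo, hφq⟩
      have hφρ : φ - ρ ≠ 0 := by have := hφIoo.2; intro hh0; linarith
      have hzn : z φ ≠ 0 := (hzneg φ hφIoo).ne
      have hq : 0 < z φ / (φ - ρ) := lt_of_lt_of_le hε hφq
      have key : D φ * g φ / z φ = (D φ * g φ / (φ - ρ)) / (z φ / (φ - ρ)) := by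
        field_simp
      rw [Real.norm_eq_abs, key, abs_div, abs_of_pos hq, div_eq_mul_inv, one_div]
      have : (z φ / (φ - ρ))⁻¹ ≤ ε⁻¹ := inv_anti₀ hε hφq
      exact mul_le_mul_of_nonneg_left this (abs_nonneg _)
    · have := (hlim.abs).mul_const (1 / ε)
      simpa using this
  -- the derivative tends to h ρ - c
  have hderivlim : Tendsto (fun φ => h φ - c - D φ * g φ / z φ) (𝓝[<] ρ)
      (𝓝 (h ρ - c)) := by
    have := (hhlim.sub_const c).sub hDgz
    simpa using this
  -- apply the extension lemma
  have hmain : HasDerivWithinAt z (h ρ - c) (Iic ρ) ρ := by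
    apply hasDerivWithinAt_Iic_of_tendsto_deriv (s := Ioo 0 ρ)
    · intro x hx
      exact (hode x hx).differentiableAt.differentiableWithinAt
    · exact (hz ρ hρIcc).mono Ioo_subset_Icc_self
    · exact hmemIoo
    · apply hderivlim.congr'
      filter_upwards [hmemIoo] with x hx
      exact ((hode x hx).deriv).symm
  rw [hasDerivWithinAt_iff_tendsto_slope, Iic_diff_right] at hmain
  apply hmain.congr
  intro φ
  simp [slope_def_field, div_eq_mul_inv]
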